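/- For any 0 ≤ ν ≤ μ, any stepsize h > 0, and all x, y ∈ E, (1/n) Σ_{i=1}^n ‖y − h(∇f(x) + ∇f_i(y) − ∇f_i(x)) − x*‖² ≤ (1 − νh)‖y − x*‖² − 2h(1 − 2Lh)(f(y) − f(x*)) + 4(L − μ)h²(f(x) − f(x*)). -/

import Mathlib

set_option maxHeartbeats 1000000

open scoped RealInnerProductSpace BigOperators
open InnerProductSpace

lemma expand_sq {E : Type*} [NormedAddCommGroup E] [InnerProductSpace ℝ E] (r v : E) (h : ℝ) :
    ‖r - h • v‖^2 = ‖r‖^2 - 2*h*⟪v, r⟫ + h^2*‖v‖^2 := by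
  rw [norm_sub_sq_real, real_inner_smul_right, real_inner_comm, norm_smul, mul_pow,
    Real.norm_eq_abs, sq_abs]
  ring

lemma sq_norm_sub_le {E : Type*} [NormedAddCommGroup E] (u v : E) :
    ‖u - v‖^2 ≤ 2*‖u‖^2 + 2*‖v‖^2 := by
  have h := norm_sub_le u v
  nlinarith [norm_nonneg u, norm_nonneg v, norm_nonneg (u-v), sq_nonneg (‖u‖ - ‖v‖)]

lemma coerc {E : Type*} [NormedAddCommGroup E] [InnerProductSpace ℝ E]
    {L : ℝ} (hL : 0 < L) (φ : E → ℝ) (gφ : E → E)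
    (hconv : ∀ x z : E, φ x + ⟪gφ x, z - x⟫ ≤ φ z)
    (hsmooth : ∀ x z : E, φ z ≤ φ x + ⟪gφ x, z - x⟫ + L / 2 * ‖z - x‖ ^ 2)
    (w z : E) : ‖gφ z - gφ w‖ ^ 2 ≤ 2 * L * (φ z - φ w - ⟪gφ w, z - w⟫) := by
  set g := gφ z - gφ w with hg
  set u := z - L⁻¹ • g with hu
  have h1 := hconv w u
  have h2 := hsmooth z u
  have hu_w : u - w = (z - w) - L⁻¹ • g := by rw [hu]; abel
  have hu_z : u - z = -(L⁻¹ • g) := by rw [hu]; abel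
  rw [hu_w, inner_sub_right, real_inner_smul_right] at h1
  rw [hu_z, inner_neg_right, real_inner_smul_right, norm_neg, norm_smul, mul_pow,
    Real.norm_eq_abs, sq_abs] at h2
  have hgg : L⁻¹ * ⟪gφ z, g⟫ - L⁻¹ * ⟪gφ w, g⟫ = L⁻¹ * ‖g‖^2 := by
    rw [← mul_sub, ← inner_sub_left, ← hg, real_inner_self_eq_norm_sq]
  have e : L / 2 * (L⁻¹^2 * ‖g‖^2) = L⁻¹/2 * ‖g‖^2 := by field_simp
  rw [e] at h2
  have key : L⁻¹/2 * ‖g‖^2 ≤ φ z - φ w - ⟪gφ w, z - w⟫ := by linarith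
  have h5 := mul_le_mul_of_nonneg_left key (by positivity : (0:ℝ) ≤ 2*L)
  have e2 : 2*L * (L⁻¹/2 * ‖g‖^2) = ‖g‖^2 := by field_simp
  linarith [e2 ▸ h5]

lemma grad_avg {E : Type*} [NormedAddCommGroup E] [InnerProductSpace ℝ E] [CompleteSpace E]
    {n : ℕ} (f : Fin n → E → ℝ) (hdiff : ∀ i, Differentiable ℝ (f i)) (w : E) :
    gradient (fun x => (1 / (n : ℝ)) * ∑ i, f i x) w
      = (1 / (n : ℝ)) • ∑ i, gradient (f i) w := by
  have h1 : ∀ i : Fin n, HasFDerivAt (f i) (toDual ℝ E (gradient (f i) w)) w :=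
    fun i => ((hdiff i w).hasGradientAt).hasFDerivAt
  have h2 : HasFDerivAt (fun z => ∑ i, f i z) (∑ i, toDual ℝ E (gradient (f i) w)) w :=
    HasFDerivAt.fun_sum (fun i _ => h1 i)
  have h3 : HasFDerivAt (fun z => (1 / (n : ℝ)) * ∑ i, f i z)
      ((1 / (n : ℝ)) • ∑ i, toDual ℝ E (gradient (f i) w)) w := h2.const_mul _
  have h4 := h3.hasGradientAt.gradient
  rw [h4, map_smul, map_sum]
  simp [gradient]

theorem s2gd_distance_recursion
    {E : Type*} [NormedAddCommGroup E] [InnerProductSpace ℝ E] [CompleteSpace E]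
    {n : ℕ} (hn : 0 < n) (f : Fin n → E → ℝ) {L μ : ℝ} (hL : 0 < L)
    (hμpos : 0 < μ) (hμL : μ ≤ L)
    (hdiff : ∀ i, Differentiable ℝ (f i))
    (hconv : ∀ i, ∀ x z : E, f i x + ⟪gradient (f i) x, z - x⟫ ≤ f i z)
    (hsmooth : ∀ i, ∀ x z : E,
      f i z ≤ f i x + ⟪gradient (f i) x, z - x⟫ + L / 2 * ‖z - x‖ ^ 2)
    (favg : E → ℝ) (hfavg : favg = fun x => (1 / (n : ℝ)) * ∑ i, f i x)
    (hstrong : ∀ x z : E,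
      favg x + ⟪gradient favg x, z - x⟫ + μ / 2 * ‖z - x‖ ^ 2 ≤ favg z)
    (xstar : E) (hmin : ∀ z : E, favg xstar ≤ favg z)
    (hstar : gradient favg xstar = 0)
    {ν h : ℝ} (hν0 : 0 ≤ ν) (hνμ : ν ≤ μ) (hh : 0 < h) (x y : E) :
    (1 / (n : ℝ)) *
        ∑ i, ‖y - h • (gradient favg x + gradient (f i) y - gradient (f i) x) - xstar‖ ^ 2 ≤
      (1 - ν * h) * ‖y - xstar‖ ^ 2 - 2 * h * (1 - 2 * L * h) * (favg y - favg xstar) +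
        4 * (L - μ) * h ^ 2 * (favg x - favg xstar) := by
  have hn' : (0:ℝ) < (n:ℝ) := by exact_mod_cast hn
  have hga : ∀ w, gradient favg w = (1 / (n : ℝ)) • ∑ i, gradient (f i) w := by
    intro w; rw [hfavg]; exact grad_avg f hdiff w
  set g := gradient favg x with hgdef
  set gy := gradient favg y with hgydef
  set s : Fin n → E := fun i => gradient (f i) xstar with hsdef
  set a : Fin n → E := fun i => gradient (f i) y with hadef
  set b : Fin n → E := fun i => gradient (f i) x with hbdef
  -- sums of gradients
  have hsum_s : ∑ i, s i = 0 := by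
    have h0 : (0:E) = (1 / (n : ℝ)) • ∑ i, s i := by rw [← hstar]; exact hga xstar
    have := congrArg (fun v : E => (n:ℝ) • v) h0
    simpa [smul_smul, hn'.ne', mul_div_assoc] using this.symm
  have hsum_b : ∑ i, b i = (n:ℝ) • g := by
    have h0 : g = (1 / (n : ℝ)) • ∑ i, b i := hga x
    have := congrArg (fun v : E => (n:ℝ) • v) h0
    simpa [smul_smul, hn'.ne', mul_div_assoc] using this.symm
  have hsum_a : ∑ i, a i = (n:ℝ) • gy := by
    have h0 : gy = (1 / (n : ℝ)) • ∑ i, a i := hga y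
    have := congrArg (fun v : E => (n:ℝ) • v) h0
    simpa [smul_smul, hn'.ne', mul_div_assoc] using this.symm
  -- sums of values
  have hval : ∀ w, ∑ i, f i w = (n:ℝ) * favg w := by
    intro w; rw [hfavg]; field_simp
  set r := y - xstar with hrdef
  set Dy := favg y - favg xstar with hDy
  set Dx := favg x - favg xstar with hDx
  have hDy0 : 0 ≤ Dy := sub_nonneg.2 (hmin y)
  have hDx0 : 0 ≤ Dx := sub_nonneg.2 (hmin x)
  -- Step 1: exact expansion of the averaged square distance
  have hGsum : ∑ i, (g + a i - b i) = (n:ℝ) • gy := by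
    simp only [Finset.sum_sub_distrib, Finset.sum_add_distrib, Finset.sum_const,
      Finset.card_univ, Fintype.card_fin, hsum_a, hsum_b]
    rw [← Nat.cast_smul_eq_nsmul ℝ n g]
    abel
  have hinnG : ∑ i, ⟪g + a i - b i, r⟫ = (n:ℝ) * ⟪gy, r⟫ := by
    rw [← sum_inner, hGsum, real_inner_smul_left]
  have hsum1 : ∑ i, ‖y - h • (g + a i - b i) - xstar‖^2
      = (n:ℝ) * ‖r‖^2 - 2*h*((n:ℝ) * ⟪gy, r⟫) + h^2 * ∑ i, ‖g + a i - b i‖^2 := by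
    have e1 : ∀ i : Fin n, ‖y - h • (g + a i - b i) - xstar‖^2
        = ‖r‖^2 - 2*h*⟪g + a i - b i, r⟫ + h^2*‖g + a i - b i‖^2 := by
      intro i
      rw [show y - h • (g + a i - b i) - xstar = r - h • (g + a i - b i) by rw [hrdef]; abel]
      exact expand_sq r _ h
    rw [Finset.sum_congr rfl (fun i _ => e1 i)]
    rw [Finset.sum_add_distrib, Finset.sum_sub_distrib, Finset.sum_const,
      Finset.card_univ, Fintype.card_fin, ← Finset.mul_sum, hinnG, ← Finset.mul_sum,
      nsmul_eq_mul]
  -- Step 2: bound on the averaged squared gradient estimate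
  have hcoY : ∑ i, ‖a i - s i‖^2 ≤ 2*L*((n:ℝ)*Dy) := by
    have per : ∀ i : Fin n, ‖a i - s i‖^2 ≤ 2*L*(f i y - f i xstar - ⟪s i, r⟫) :=
      fun i => coerc hL (f i) (gradient (f i)) (hconv i) (hsmooth i) xstar y
    calc ∑ i, ‖a i - s i‖^2 ≤ ∑ i, 2*L*(f i y - f i xstar - ⟪s i, r⟫) :=
          Finset.sum_le_sum (fun i _ => per i)
      _ = 2*L*((n:ℝ)*Dy) := by
          rw [← Finset.mul_sum]
          simp only [Finset.sum_sub_distrib, ← sum_inner, hsum_s, hval,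
            inner_zero_left, hDy]
          ring
  have hcoX : ∑ i, ‖b i - s i‖^2 ≤ 2*L*((n:ℝ)*Dx) := by
    have per : ∀ i : Fin n, ‖b i - s i‖^2 ≤ 2*L*(f i x - f i xstar - ⟪s i, x - xstar⟫) :=
      fun i => coerc hL (f i) (gradient (f i)) (hconv i) (hsmooth i) xstar x
    calc ∑ i, ‖b i - s i‖^2 ≤ ∑ i, 2*L*(f i x - f i xstar - ⟪s i, x - xstar⟫) :=
          Finset.sum_le_sum (fun i _ => per i)
      _ = 2*L*((n:ℝ)*Dx) := by
          rw [← Finset.mul_sum]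
          simp only [Finset.sum_sub_distrib, ← sum_inner, hsum_s, hval,
            inner_zero_left, hDx]
          ring
  have hbsg : ∑ i, ‖(b i - s i) - g‖^2 = (∑ i, ‖b i - s i‖^2) - (n:ℝ) * ‖g‖^2 := by
    have e1 : ∀ i : Fin n, ‖(b i - s i) - g‖^2
        = ‖b i - s i‖^2 - 2*⟪b i - s i, g⟫ + ‖g‖^2 := fun i => norm_sub_sq_real _ _
    rw [Finset.sum_congr rfl (fun i _ => e1 i)]
    have hi : ∑ i, ⟪b i - s i, g⟫ = (n:ℝ) * ‖g‖^2 := by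
      rw [← sum_inner, Finset.sum_sub_distrib, hsum_b, hsum_s, sub_zero,
        real_inner_smul_left, real_inner_self_eq_norm_sq]
    rw [Finset.sum_add_distrib, Finset.sum_sub_distrib, ← Finset.mul_sum, hi,
      Finset.sum_const, Finset.card_univ, Fintype.card_fin, nsmul_eq_mul]
    ring
  have hgsq : 2*μ*Dx ≤ ‖g‖^2 := by
    have h1 := hstrong x xstar
    rw [show xstar - x = -(x - xstar) by abel, inner_neg_right, norm_neg] at h1
    have hc : ⟪g, x - xstar⟫ ≤ ‖g‖ * ‖x - xstar‖ := real_inner_le_norm _ _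
    nlinarith [sq_nonneg (‖g‖ - μ * ‖x - xstar‖), norm_nonneg (x - xstar), norm_nonneg g]
  have hQ : ∑ i, ‖g + a i - b i‖^2 ≤ (n:ℝ) * (4*L*Dy + 4*(L-μ)*Dx) := by
    have per : ∀ i : Fin n, ‖g + a i - b i‖^2 ≤ 2*‖a i - s i‖^2 + 2*‖(b i - s i) - g‖^2 := by
      intro i
      rw [show g + a i - b i = (a i - s i) - ((b i - s i) - g) by abel]
      exact sq_norm_sub_le _ _
    calc ∑ i, ‖g + a i - b i‖^2
        ≤ ∑ i, (2*‖a i - s i‖^2 + 2*‖(b i - s i) - g‖^2) :=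
          Finset.sum_le_sum (fun i _ => per i)
      _ = 2 * (∑ i, ‖a i - s i‖^2) + 2 * (∑ i, ‖(b i - s i) - g‖^2) := by
          rw [Finset.sum_add_distrib, ← Finset.mul_sum, ← Finset.mul_sum]
      _ ≤ (n:ℝ) * (4*L*Dy + 4*(L-μ)*Dx) := by
          rw [hbsg]
          have hg2 : (n:ℝ) * (2*μ*Dx) ≤ (n:ℝ) * ‖g‖^2 :=
            mul_le_mul_of_nonneg_left hgsq hn'.le
          ring_nf
          ring_nf at hg2 hcoY hcoX
          linarith
  have hinner : Dy + μ/2 * ‖r‖^2 ≤ ⟪gy, r⟫ := by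
    have h1 := hstrong y xstar
    rw [show xstar - y = -r by rw [hrdef]; abel, inner_neg_right, norm_neg] at h1
    rw [hDy]; linarith
  -- combine
  rw [hsum1]
  have hfrac : (1 / (n:ℝ)) * ((n:ℝ) * ‖r‖^2 - 2*h*((n:ℝ) * ⟪gy, r⟫)
      + h^2 * ∑ i, ‖g + a i - b i‖^2)
      = ‖r‖^2 - 2*h*⟪gy, r⟫ + h^2 * ((1/(n:ℝ)) * ∑ i, ‖g + a i - b i‖^2) := by
    field_simp
  rw [hfrac]
  have hQ' : (1/(n:ℝ)) * ∑ i, ‖g + a i - b i‖^2 ≤ 4*L*Dy + 4*(L-μ)*Dx := by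
    rw [div_mul_eq_mul_div, one_mul, div_le_iff₀ hn']
    linarith [hQ]
  have t1 : h^2 * ((1/(n:ℝ)) * ∑ i, ‖g + a i - b i‖^2) ≤ h^2 * (4*L*Dy + 4*(L-μ)*Dx) :=
    mul_le_mul_of_nonneg_left hQ' (sq_nonneg h)
  have t2 : 2*h*(Dy + μ/2 * ‖r‖^2) ≤ 2*h*⟪gy, r⟫ :=
    mul_le_mul_of_nonneg_left hinner (by positivity)
  have t3 : 0 ≤ (μ - ν)*h*‖r‖^2 := by
    apply mul_nonneg (mul_nonneg (sub_nonneg.2 hνμ) hh.le) (sq_nonneg _)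
  linarith [t1, t2, t3]
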